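/- Let S be an n×n unitary Hermitian complex matrix (n ≥ 2) such that each diagonal entry equals ±(1 − 2/n), every off-diagonal entry has modulus 2/n, and the number p of diagonal entries equal to 1 − 2/n satisfies 1 ≤ p ≤ n − 1. Then n is even and p = n/2. -/

import Mathlib

open Matrix Complex

/-- If S is n×n unitary Hermitian with diagonal entries ±(1−2/n), off-diagonal entries of
modulus 2/n, and the number p of diagonal entries equal to 1−2/n satisfies 1 ≤ p ≤ n−1,
then n is even and p = n/2. -/
theorem stmt_6 (n : ℕ) (hn : 2 ≤ n) (S : Matrix (Fin n) (Fin n) ℂ)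
    (hu : S * Sᴴ = 1) (hh : Sᴴ = S)
    (hdiag : ∀ j, S j j = 1 - 2 / n ∨ S j j = 2 / n - 1)
    (hoff : ∀ j l, j ≠ l → ‖S j l‖ = 2 / n)
    (p : ℕ) (hp : p = (Finset.univ.filter fun j => S j j = 1 - 2 / n).card)
    (hp1 : 1 ≤ p) (hp2 : p ≤ n - 1) :
    Even n ∧ 2 * p = n := by
  have hherm : S.IsHermitian := hh
  have hSS : S * S = 1 := by rw [hh] at hu; exact hu
  -- eigenvalues are ±1
  have heig : ∀ i, hherm.eigenvalues i = 1 ∨ hherm.eigenvalues i = -1 := by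
    intro i
    have hv := hherm.mulVec_eigenvectorBasis i
    have hvne : ⇑(hherm.eigenvectorBasis i) ≠ 0 := by
      have := hherm.eigenvectorBasis.orthonormal.ne_zero i
      intro h
      apply this
      ext j
      exact congrFun h j
    have h2 : (S * S) *ᵥ ⇑(hherm.eigenvectorBasis i)
        = (hherm.eigenvalues i * hherm.eigenvalues i) • ⇑(hherm.eigenvectorBasis i) := by
      rw [← Matrix.mulVec_mulVec, hv, Matrix.mulVec_smul, hv, smul_smul]
    rw [hSS, Matrix.one_mulVec] at h2
    obtain ⟨j, hj⟩ := Function.ne_iff.mp hvne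
    have h4 := congrFun h2 j
    rw [Pi.smul_apply, Complex.real_smul] at h4
    simp only [Pi.zero_apply] at hj
    have h6 : ((hherm.eigenvalues i * hherm.eigenvalues i : ℝ) : ℂ) = 1 :=
      mul_right_cancel₀ hj (by rw [one_mul]; exact h4.symm)
    have h3 : hherm.eigenvalues i * hherm.eigenvalues i = 1 := by exact_mod_cast h6
    rcases mul_self_eq_one_iff.mp h3 with h | h
    · left; exact h
    · right; exact h
  -- trace = sum of eigenvalues
  have hU := hherm.eigenvectorUnitary.2
  have htr : S.trace = ∑ i, (hherm.eigenvalues i : ℂ) := by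
    conv_lhs => rw [hherm.spectral_theorem]
    rw [Unitary.conjStarAlgAut_apply, Matrix.trace_mul_cycle,
      (Matrix.mem_unitaryGroup_iff').mp hU, one_mul, Matrix.trace_diagonal]
    simp
  set a : ℕ := (Finset.univ.filter fun i => hherm.eigenvalues i = 1).card with ha
  have hsum : ∑ i, (hherm.eigenvalues i : ℂ) = (a : ℂ) - ((n : ℂ) - a) := by
    rw [← Finset.sum_filter_add_sum_filter_not Finset.univ
      (fun i => hherm.eigenvalues i = 1)]
    have h1 : ∑ i ∈ Finset.univ.filter (fun i => hherm.eigenvalues i = 1),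
        ((hherm.eigenvalues i : ℂ)) = (a : ℂ) := by
      rw [Finset.sum_congr rfl (fun i hi => by
        rw [(Finset.mem_filter.mp hi).2])]
      simp [ha]
    have h2 : ∑ i ∈ Finset.univ.filter (fun i => ¬ hherm.eigenvalues i = 1),
        ((hherm.eigenvalues i : ℂ)) = -(((n : ℂ) - a)) := by
      rw [Finset.sum_congr rfl (fun i hi => by
        rcases heig i with h | h
        · exact absurd h (Finset.mem_filter.mp hi).2
        · rw [h])]
      rw [Finset.sum_const, Finset.filter_not, Finset.card_sdiff_of_subset (Finset.filter_subset _ _)]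
      have hle : a ≤ n := by
        calc a ≤ Finset.univ.card := by rw [ha]; exact Finset.card_filter_le _ _
        _ = n := by simp
      simp only [Finset.card_univ, Fintype.card_fin, nsmul_eq_mul, ← ha]
      push_cast [hle]
      ring
    rw [h1, h2]
    ring
  -- trace from diagonal
  have hdtr : S.trace = (p : ℂ) * (1 - 2 / n) + ((n : ℂ) - p) * (2 / n - 1) := by
    rw [Matrix.trace]
    simp only [Matrix.diag]
    rw [← Finset.sum_filter_add_sum_filter_not Finset.univ
      (fun j => S j j = 1 - 2 / (n : ℂ))]
    have h1 : ∑ j ∈ Finset.univ.filter (fun j => S j j = 1 - 2 / (n : ℂ)),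
        S j j = (p : ℂ) * (1 - 2 / n) := by
      rw [Finset.sum_congr rfl (fun j hj => (Finset.mem_filter.mp hj).2)]
      rw [Finset.sum_const, hp, nsmul_eq_mul]
    have h2 : ∑ j ∈ Finset.univ.filter (fun j => ¬ S j j = 1 - 2 / (n : ℂ)),
        S j j = ((n : ℂ) - p) * (2 / n - 1) := by
      rw [Finset.sum_congr rfl (fun j hj => by
        rcases hdiag j with h | h
        · exact absurd h (Finset.mem_filter.mp hj).2
        · exact h)]
      rw [Finset.sum_const, Finset.filter_not, Finset.card_sdiff_of_subset (Finset.filter_subset _ _)]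
      have hle : p ≤ n := by
        rw [hp]
        calc _ ≤ Finset.univ.card := Finset.card_filter_le _ _
        _ = n := by simp
      simp only [Finset.card_univ, Fintype.card_fin, nsmul_eq_mul, ← hp]
      push_cast [hle]
      ring
    rw [h1, h2]
  -- combine
  have hn0 : (n : ℂ) ≠ 0 := by
    exact_mod_cast Nat.cast_ne_zero.mpr (by omega)
  have hkeyC : (((p : ℤ) * n - 2 * p + n : ℤ) : ℂ) = (((a : ℤ) * n : ℤ) : ℂ) := by
    push_cast
    have hEq : (p : ℂ) * (1 - 2 / n) + ((n : ℂ) - p) * (2 / n - 1)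
        = (a : ℂ) - ((n : ℂ) - a) := by rw [← hdtr, htr, hsum]
    field_simp at hEq
    linear_combination hEq / 2
  have hkey : ((p : ℤ) * n - 2 * p + n : ℤ) = (a : ℤ) * n := by exact_mod_cast hkeyC
  have hpn : p < n := by omega
  have h2p : (2 : ℤ) * p = n * ((p : ℤ) + 1 - a) := by linarith
  have hnZ : (2 : ℤ) ≤ n := by exact_mod_cast hn
  have hd1 : (p : ℤ) + 1 - a = 1 := by
    rcases lt_trichotomy ((p : ℤ) + 1 - a) 1 with h | h | h
    · have : (p : ℤ) + 1 - a ≤ 0 := by omega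
      nlinarith [(by exact_mod_cast hp1 : (1 : ℤ) ≤ p)]
    · exact h
    · have : (2 : ℤ) ≤ (p : ℤ) + 1 - a := by omega
      nlinarith [(by exact_mod_cast hpn : (p : ℤ) < n)]
  rw [hd1, mul_one] at h2p
  have hfin : 2 * p = n := by exact_mod_cast h2p
  exact ⟨⟨p, by omega⟩, hfin⟩
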